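/- A 3CM M halts if and only if the set G = {gᵏ(2) : k ∈ ℕ} is bounded (equivalently, finite). -/

import Mathlib

set_option maxHeartbeats 1000000
set_option synthInstance.maxHeartbeats 1000000
set_option synthInstance.maxSize 512

attribute [local instance] Classical.propDecidable

noncomputable section

/-! ### Terms and atoms -/

/-- Variables: ordinary variables `Sum.inl n`, or fresh variables `Sum.inr (c, k)`
introduced by the trigger with code `c` for the head variable with code `k`. -/
abbrev Var : Type := ℕ ⊕ (ℕ × ℕ)

/-- Terms: constants `Sum.inl c` or variables `Sum.inr v`. -/
abbrev FTerm : Type := ℕ ⊕ Var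

def ct (n : ℕ) : FTerm := Sum.inl n
def vt (n : ℕ) : FTerm := Sum.inr (Sum.inl n)

/-- An atom: a predicate name together with its list of arguments. -/
abbrev Atom : Type := ℕ × List FTerm

/-- Active domain: all terms occurring in an atom set. -/
def adom (J : Set Atom) : Set FTerm := {t | ∃ a ∈ J, t ∈ a.2}

def atomVarsF (a : Atom) : Finset Var := (a.2.filterMap Sum.getRight?).toFinset

def varsF (A : Finset Atom) : Finset Var := A.biUnion atomVarsF

def setVars (J : Set Atom) : Set Var := {v | ∃ a ∈ J, Sum.inr v ∈ a.2}

/-! ### Substitutions and homomorphisms -/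

abbrev Subst := Var → FTerm

def applyT (σ : Subst) : FTerm → FTerm
  | Sum.inl c => Sum.inl c
  | Sum.inr v => σ v

def applyA (σ : Subst) (a : Atom) : Atom := (a.1, a.2.map (applyT σ))

def IsHomOn (σ : Subst) (A B : Set Atom) : Prop := ∀ a ∈ A, applyA σ a ∈ B

def HomBetween (A B : Set Atom) : Prop := ∃ σ : Subst, IsHomOn σ A B

def IsRetraction (σ : Subst) (A B : Set Atom) : Prop :=
  IsHomOn σ A B ∧ ∀ v ∈ setVars A ∩ setVars B, σ v = Sum.inr v

/-- Isomorphism of atom sets: a pair of mutually inverse homomorphisms. -/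
def Isomorphic (A B : Set Atom) : Prop :=
  ∃ σ τ : Subst, IsHomOn σ A B ∧ IsHomOn τ B A ∧
    (∀ a ∈ A, applyA τ (applyA σ a) = a) ∧ (∀ b ∈ B, applyA σ (applyA τ b) = b)

/-! ### Rules -/

/-- A rule is a pair (body, head). Its existential variables are the head variables
not occurring in the body; its frontier the variables shared by body and head.
A rule is Datalog when every head variable occurs in the body. -/
abbrev Rule : Type := Finset Atom × Finset Atom

def frontierOf (R : Rule) : Finset Var := varsF R.1 ∩ varsF R.2

def DatRules (Rset : Finset Rule) : Finset Rule := Rset.filter fun R => varsF R.2 ⊆ varsF R.1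
def NDatRules (Rset : Finset Rule) : Finset Rule := Rset.filter fun R => ¬ varsF R.2 ⊆ varsF R.1

/-- Satisfaction of a rule in an atom set. -/
def SatisfiesRule (J : Set Atom) (R : Rule) : Prop :=
  ∀ σ : Subst, IsHomOn σ (R.1 : Set Atom) J →
    ∃ σ' : Subst, (∀ v ∈ varsF R.1, σ' v = σ v) ∧ IsHomOn σ' (R.2 : Set Atom) J

def IsModel (Rset : Finset Rule) (I J : Set Atom) : Prop :=
  (∀ R ∈ Rset, SatisfiesRule J R) ∧ HomBetween I J

/-- BCQ entailment: every model of the KB satisfies the query. -/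
def Entails (Rset : Finset Rule) (I q : Set Atom) : Prop :=
  ∀ J : Set Atom, IsModel Rset I J → HomBetween q J

def IsUniversalModel (Rset : Finset Rule) (I U : Set Atom) : Prop :=
  IsModel Rset I U ∧ ∀ J : Set Atom, IsModel Rset I J → HomBetween U J

/-! ### Triggers -/

structure Trigger where
  rule : Rule
  sub : Subst

/-- Injective code of a trigger (a trigger is determined by its rule and the
restriction of its substitution to the body variables). -/
def Trigger.code (t : Trigger) : ℕ :=
  Encodable.encode (t.rule, (varsF t.rule.1).image fun v => (v, t.sub v))

/-- The canonical extension of the trigger substitution, mapping each existential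
variable `z` to the fresh variable unique for `z` and the trigger. -/
def Trigger.extSub (t : Trigger) : Subst := fun v =>
  if v ∈ varsF t.rule.1 then t.sub v
  else Sum.inr (Sum.inr (t.code, Encodable.encode v))

def Trigger.out (t : Trigger) : Finset Atom := t.rule.2.image (applyA t.extSub)

def Trigger.isOn (t : Trigger) (J : Set Atom) : Prop := IsHomOn t.sub (t.rule.1 : Set Atom) J

/-! ### Chase variants, derivations, chase termination classes -/

inductive ChaseVariant : Type
  | O | SO | R | E
deriving DecidableEq

def Applicable : ChaseVariant → Trigger → Set Atom → Prop
  | .O, t, J => ¬ ((t.out : Set Atom) ⊆ J)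
  | .SO, t, J => ∀ t' : Trigger, t'.rule = t.rule → t'.isOn J →
      (∀ v ∈ frontierOf t.rule, t'.sub v = t.sub v) → ¬ ((t'.out : Set Atom) ⊆ J)
  | .R, t, J => ¬ ∃ σ : Subst, IsRetraction σ (J ∪ (t.out : Set Atom)) J
  | .E, t, J => ¬ ∃ σ : Subst, IsHomOn σ (J ∪ (t.out : Set Atom)) J

def instSeq (I : Set Atom) (steps : ℕ → Option Trigger) : ℕ → Set Atom
  | 0 => I
  | n + 1 => instSeq I steps n ∪
      (match steps n with
        | none => (∅ : Set Atom)
        | some t => (t.out : Set Atom))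

/-- A (possibly infinite) derivation from the knowledge base `⟨Rset, I⟩`. -/
structure Deriv (Rset : Finset Rule) (I : Set Atom) where
  steps : ℕ → Option Trigger
  prefix_closed : ∀ n, steps n = none → steps (n + 1) = none
  valid : ∀ n t, steps n = some t →
    t.rule ∈ Rset ∧ t.isOn (instSeq I steps n) ∧ ¬ ((t.out : Set Atom) ⊆ instSeq I steps n)

def Deriv.inst {Rset : Finset Rule} {I : Set Atom} (D : Deriv Rset I) (n : ℕ) :
    Set Atom := instSeq I D.steps n

def Deriv.res {Rset : Finset Rule} {I : Set Atom} (D : Deriv Rset I) : Set Atom :=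
  ⋃ n, D.inst n

def Deriv.Finite {Rset : Finset Rule} {I : Set Atom} (D : Deriv Rset I) : Prop :=
  ∃ n, D.steps n = none

def Deriv.IsX {Rset : Finset Rule} {I : Set Atom} (X : ChaseVariant)
    (D : Deriv Rset I) : Prop :=
  ∀ n t, D.steps n = some t → Applicable X t (D.inst n)

def Deriv.Fair {Rset : Finset Rule} {I : Set Atom} (X : ChaseVariant)
    (D : Deriv Rset I) : Prop :=
  ∀ i, ∀ t : Trigger, t.rule ∈ Rset → t.isOn (D.inst i) → Applicable X t (D.inst i) →
    ∃ j, i < j ∧ ¬ Applicable X t (D.inst j)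

/-- All-instance, all-derivation chase termination. -/
def CTall (X : ChaseVariant) (Rset : Finset Rule) : Prop :=
  ∀ I : Finset Atom, ∀ D : Deriv Rset (I : Set Atom), D.IsX X → D.Fair X → D.Finite

/-- All-instance, some-derivation chase termination. -/
def CTex (X : ChaseVariant) (Rset : Finset Rule) : Prop :=
  ∀ I : Finset Atom, ∃ D : Deriv Rset (I : Set Atom), D.IsX X ∧ D.Fair X ∧ D.Finite

inductive CTQuant : Type
  | all | ex

def CT (X : ChaseVariant) : CTQuant → Finset Rule → Prop
  | .all => CTall X
  | .ex => CTex X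

/-- The result of some fair `X`-derivation from `⟨Rset, J⟩`. -/
def ChX (X : ChaseVariant) (Rset : Finset Rule) (J : Set Atom) : Set Atom :=
  if h : ∃ D : Deriv Rset J, D.IsX X ∧ D.Fair X then h.choose.res else J

/-! ### Gaifman graph, treewidth, bts -/

def gaifmanAdj (J : Set Atom) (u v : FTerm) : Prop :=
  u ≠ v ∧ ∃ a ∈ J, u ∈ a.2 ∧ v ∈ a.2

/-- The (Gaifman graph of the) atom set `J` has treewidth at most `k`:
there is a tree decomposition all of whose bags have size at most `k + 1`. -/
def TreewidthAtMost (J : Set Atom) (k : ℕ) : Prop :=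
  ∃ (ι : Type) (T : SimpleGraph ι) (bag : ι → Finset FTerm),
    T.Connected ∧ T.IsAcyclic ∧
    (∀ v ∈ adom J, ∃ i, v ∈ bag i) ∧
    (∀ u v : FTerm, gaifmanAdj J u v → ∃ i, u ∈ bag i ∧ v ∈ bag i) ∧
    (∀ v : FTerm, (SimpleGraph.induce {i | v ∈ bag i} T).Preconnected) ∧
    (∀ i, (bag i).card ≤ k + 1)

/-- Bounded-treewidth sets: for every instance, some universal model of bounded treewidth. -/
def IsBts (Rset : Finset Rule) : Prop :=
  ∀ I : Finset Atom, ∃ (k : ℕ) (U : Set Atom),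
    IsUniversalModel Rset (I : Set Atom) U ∧ TreewidthAtMost U k

/-! ### Three-counter machines -/

/-- A three-counter machine: states `0, …, m − 1` (state `0` is initial, standing for `q₁`),
and a partial transition function given by a finite table. -/
structure TCM where
  m : ℕ
  hm : 0 < m
  δ : List ((ℕ × Bool × Bool) × (ℕ × Int × Int))
  keys_nodup : (δ.map Prod.fst).Nodup
  wf : ∀ e ∈ δ, e.1.1 < m ∧ e.2.1 < m ∧ e.2.2.1.natAbs ≤ 1 ∧ e.2.2.2.natAbs ≤ 1

/-- A configuration: state, two counters, and the time counter. -/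
abbrev Config : Type := ℕ × ℕ × ℕ × ℕ

def TCM.step (M : TCM) (q : ℕ) (b1 b2 : Bool) : Option (ℕ × Int × Int) :=
  (M.δ.find? fun e => decide (e.1 = (q, b1, b2))).map Prod.snd

def TCM.next (M : TCM) (C : Config) : Option Config :=
  match M.step C.1 (decide (C.2.1 ≠ 0)) (decide (C.2.2.1 ≠ 0)) with
  | none => none
  | some (q', d1, d2) =>
      some (q', ((C.2.1 : ℤ) + d1).toNat, ((C.2.2.1 : ℤ) + d2).toNat, C.2.2.2 + 1)

def TCM.run (M : TCM) : ℕ → Option Config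
  | 0 => some (0, 0, 0, 0)
  | n + 1 => (M.run n).bind M.next

/-- The machine halts: some reachable configuration has no successor. -/
def TCM.Halts (M : TCM) : Prop := ∃ n C, M.run n = some C ∧ M.next C = none

/-! ### Prime encoding of configurations -/

/-- The least prime strictly greater than `n` (computably). -/
def nextPrime (n : ℕ) : ℕ := Nat.find (Nat.exists_infinite_primes (n + 1))

/-- `prm i` is the `(i+1)`-st prime `p_{i+1}`, i.e. `prm 0 = 2`. -/
def prm : ℕ → ℕ
  | 0 => 2
  | k + 1 => nextPrime (prm k)

/-- Encoding of a configuration as a natural number. -/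
def TCM.enc (M : TCM) (C : Config) : ℕ :=
  prm C.1 * prm M.m ^ C.2.1 * prm (M.m + 1) ^ C.2.2.1 * prm (M.m + 2) ^ C.2.2.2

/-- `p = p₁ ⋯ p_{m+3}`. -/
def TCM.p (M : TCM) : ℕ := ∏ i ∈ Finset.range (M.m + 3), prm i

/-- Decode the state from a residue modulo `M.p`. -/
def TCM.stateOf (M : TCM) (i : ℕ) : Option ℕ :=
  (List.range M.m).find? fun s => decide (prm s ∣ i)

/-- The canonical pair `(q_i, r_i)` realizing the prime encoding of the transitions. -/
def TCM.qr (M : TCM) (i : ℕ) : ℕ × ℕ :=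
  match M.stateOf i with
  | none => (1, 1)
  | some s =>
      let b1 : Bool := decide (prm M.m ∣ i)
      let b2 : Bool := decide (prm (M.m + 1) ∣ i)
      match M.step s b1 b2 with
      | none => (1, 1)
      | some (s', d1, d2) =>
          let e1 : ℤ := if b1 then d1 else max d1 0
          let e2 : ℤ := if b2 then d2 else max d2 0
          let num : ℕ := prm s' * prm (M.m + 2) *
            (if e1 = 1 then prm M.m else 1) * (if e2 = 1 then prm (M.m + 1) else 1)
          let den : ℕ := prm s *
            (if e1 = -1 then prm M.m else 1) * (if e2 = -1 then prm (M.m + 1) else 1)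
          (num / Nat.gcd num den, den / Nat.gcd num den)

def TCM.qi (M : TCM) (i : ℕ) : ℕ := (M.qr i).1
def TCM.ri (M : TCM) (i : ℕ) : ℕ := (M.qr i).2

/-- `g(n) = q_{n mod p} · n / r_{n mod p}`. -/
def TCM.g (M : TCM) (n : ℕ) : ℕ := M.qi (n % M.p) * n / M.ri (n % M.p)

/-- `gᵏ(2)`. -/
def TCM.gIter (M : TCM) (k : ℕ) : ℕ := (M.g)^[k] 2

/-- `G = {gᵏ(2) : k ∈ ℕ}`. -/
def TCM.Gset (M : TCM) : Set ℕ := Set.range M.gIter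

/-! ### The rule set `R_M` -/

def pEnd : ℕ := 0
def pFlood : ℕ := 1
def pS0 : ℕ := 2
def pS : ℕ := 3
def pG : ℕ := 4
def pR (i : ℕ) : ℕ := 5 + 2 * i
def pT (i : ℕ) : ℕ := 6 + 2 * i

/-- `j`-th vertex of an `S`-path of length `n` from variable `a` to variable `b`
with fresh intermediate variables `base + 1, …, base + n − 1`. -/
def pathVar (a b base n j : ℕ) : FTerm :=
  if j = 0 then vt a else if j = n then vt b else vt (base + j)

/-- The atoms of `Sⁿ(x_a, x_b)`: an `S`-path of length `n`. -/
def spath (a b base n : ℕ) : Finset Atom :=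
  (Finset.range n).image fun j =>
    (pS, [pathVar a b base n j, pathVar a b base n (j + 1)])

/-- Rule (1): `S₀(x,y) → S(x,y)`. -/
def ruleS : Rule := ({(pS0, [vt 0, vt 1])}, {(pS, [vt 0, vt 1])})

/-- Rule (2): `R_i(x,y) ∧ S(y,z) → R_{i+1}(x,z)` (indices modulo `p`). -/
def ruleR (M : TCM) (i : ℕ) : Rule :=
  ({(pR i, [vt 0, vt 1]), (pS, [vt 1, vt 2])}, {(pR ((i + 1) % M.p), [vt 0, vt 2])})

/-- Rule (3): `T_i(x,y,z) ∧ S^{r_i}(y,y′) ∧ S^{q_i}(z,z′) → T_i(x,y′,z′)`. -/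
def ruleT (M : TCM) (i : ℕ) : Rule :=
  (({(pT i, [vt 0, vt 1, vt 2])} : Finset Atom) ∪ spath 1 3 10 (M.ri i) ∪
      spath 2 4 (11 + M.ri i) (M.qi i),
    {(pT i, [vt 0, vt 3, vt 4])})

/-- Rule (4): `S(x,y) → Flood(y)`. -/
def ruleFloodProp : Rule := ({(pS, [vt 0, vt 1])}, {(pFlood, [vt 1])})

/-- Rule (5): `End(x) → S(x,x)`. -/
def ruleSEnd : Rule := ({(pEnd, [vt 0])}, {(pS, [vt 0, vt 0])})

/-- Rule (6): `S²(x,y) → G(x,y)`. -/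
def ruleGInit : Rule := (spath 0 1 10 2, {(pG, [vt 0, vt 1])})

/-- Rule (7): `G(x,y) ∧ R_i(x,y) ∧ T_i(x,y,z) → G(x,z)`. -/
def ruleGStep (i : ℕ) : Rule :=
  ({(pG, [vt 0, vt 1]), (pR i, [vt 0, vt 1]), (pT i, [vt 0, vt 1, vt 2])},
    {(pG, [vt 0, vt 2])})

/-- Rule (8): `Flood(x) ∧ Flood(y) ∧ Flood(z) → G(x,y) ∧ ⋀_{j<p} (R_j(x,y) ∧ T_j(x,y,z))`. -/
def ruleFloodGen (M : TCM) : Rule :=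
  ({(pFlood, [vt 0]), (pFlood, [vt 1]), (pFlood, [vt 2])},
    ({(pG, [vt 0, vt 1])} : Finset Atom) ∪
      (Finset.range M.p).biUnion fun j =>
        {(pR j, [vt 0, vt 1]), (pT j, [vt 0, vt 1, vt 2])})

/-- Rule (9): `G(y,z) ∧ End(z) → ∃x (S₀(x,y) ∧ R₀(x,x) ∧ ⋀_{j<p} T_j(x,x,x))`. -/
def ruleEx (M : TCM) : Rule :=
  ({(pG, [vt 1, vt 2]), (pEnd, [vt 2])},
    ({(pS0, [vt 0, vt 1]), (pR 0, [vt 0, vt 0])} : Finset Atom) ∪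
      (Finset.range M.p).biUnion fun j => {(pT j, [vt 0, vt 0, vt 0])})

/-- The rule set `R_M`. -/
def RM (M : TCM) : Finset Rule :=
  ({ruleS, ruleFloodProp, ruleSEnd, ruleGInit, ruleFloodGen M, ruleEx M} : Finset Rule) ∪
    (Finset.range M.p).biUnion fun i => {ruleR M i, ruleT M i, ruleGStep i}

/-- The alternating Datalog/non-Datalog chase steps `Step^X_n`. -/
def StepX (X : ChaseVariant) (M : TCM) : ℕ → Set Atom → Set Atom
  | 0, I => ChX X (DatRules (RM M)) I
  | n + 1, I => ChX X (DatRules (RM M)) (ChX X (NDatRules (RM M)) (StepX X M n I))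

/-- The constant `w`, the "well of positivity". -/
def wC : FTerm := ct 0

/-- The instance `{End(w)}`. -/
def IE : Set Atom := {(pEnd, [wC])}

/-- Membership in the signature of `R_M` (predicate together with its arity). -/
def InSig (M : TCM) (a : Atom) : Prop :=
  ((a.1 = pEnd ∨ a.1 = pFlood) ∧ a.2.length = 1) ∨
  ((a.1 = pS0 ∨ a.1 = pS ∨ a.1 = pG ∨ ∃ i < M.p, a.1 = pR i) ∧ a.2.length = 2) ∨
  ((∃ i < M.p, a.1 = pT i) ∧ a.2.length = 3)

/-- The critical instance: all atoms `P(w, …, w)` over the signature of `R_M`. -/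
def Crit (M : TCM) : Set Atom := {a | InSig M a ∧ ∀ t ∈ a.2, t = wC}

/-- An `S`-path of length `k` from `s` to `t` in `J`. -/
def SPath (J : Set Atom) : ℕ → FTerm → FTerm → Prop
  | 0, s, t => s = t
  | k + 1, s, t => ∃ u, (pS, [s, u]) ∈ J ∧ SPath J k u t

/-- The restriction `J|_S`: atoms of `J` all of whose terms belong to `S`. -/
def restrictTo (J : Set Atom) (S : Set FTerm) : Set Atom := {a ∈ J | ∀ t ∈ a.2, t ∈ S}

/-- An explicit injective encoding of three-counter machines by natural numbers. -/
def encodeTCM (M : TCM) : ℕ := Encodable.encode (M.m, M.δ)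


/-! ### Auxiliary lemmas for stmt_1 -/

lemma nextPrime_spec (n : ℕ) : n + 1 ≤ nextPrime n ∧ (nextPrime n).Prime :=
  Nat.find_spec (Nat.exists_infinite_primes (n + 1))

lemma prm_prime (k : ℕ) : (prm k).Prime := by
  cases k with
  | zero => exact Nat.prime_two
  | succ k => exact (nextPrime_spec (prm k)).2

lemma prm_strictMono : StrictMono prm :=
  strictMono_nat_of_lt_succ fun n => (nextPrime_spec (prm n)).1

lemma prm_two_le (k : ℕ) : 2 ≤ prm k := (prm_prime k).two_le

lemma prm_pos (k : ℕ) : 0 < prm k := (prm_prime k).pos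

lemma prm_dvd_pow_iff {s t e : ℕ} : prm s ∣ prm t ^ e ↔ s = t ∧ 0 < e := by
  constructor
  · intro h
    rcases Nat.eq_zero_or_pos e with he | he
    · subst he; simp at h; exact absurd h (prm_prime s).one_lt.ne'
    · have h2 := (prm_prime s).dvd_of_dvd_pow h
      have h3 := ((Nat.prime_dvd_prime_iff_eq (prm_prime s) (prm_prime t)).1 h2)
      exact ⟨prm_strictMono.injective h3, he⟩
  · rintro ⟨rfl, he⟩
    exact dvd_pow_self _ he.ne'

lemma prm_dvd_prm_iff {s t : ℕ} : prm s ∣ prm t ↔ s = t := by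
  have := @prm_dvd_pow_iff s t 1
  simpa using this

lemma prm_dvd_enc_iff (M : TCM) (C : Config) (s : ℕ) :
    prm s ∣ M.enc C ↔
      (s = C.1 ∨ (s = M.m ∧ C.2.1 ≠ 0) ∨ (s = M.m + 1 ∧ C.2.2.1 ≠ 0) ∨
        (s = M.m + 2 ∧ C.2.2.2 ≠ 0)) := by
  unfold TCM.enc
  rw [(prm_prime s).dvd_mul, (prm_prime s).dvd_mul, (prm_prime s).dvd_mul,
    prm_dvd_prm_iff, prm_dvd_pow_iff, prm_dvd_pow_iff, prm_dvd_pow_iff]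
  omega

lemma prm_dvd_mod_p (M : TCM) (s n : ℕ) (hs : s < M.m + 3) :
    prm s ∣ n % M.p ↔ prm s ∣ n :=
  Nat.dvd_mod_iff (Finset.dvd_prod_of_mem _ (Finset.mem_range.2 hs))

lemma find?_unique {α : Type*} (P : α → Bool) (a : α) :
    ∀ (l : List α), a ∈ l → (∀ x ∈ l, P x = true ↔ x = a) → l.find? P = some a := by
  intro l
  induction l with
  | nil => intro h; simp at h
  | cons x xs ih =>
    intro hmem h
    rcases hx : P x with _ | _
    · have hxa : x ≠ a := fun he => by
        have := (h x (by simp)).2 he; rw [hx] at this; exact Bool.false_ne_true this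
      rw [List.find?_cons_of_neg (by simp [hx])]
      have hmem' : a ∈ xs := by
        rcases List.mem_cons.1 hmem with rfl | h'
        · exact absurd rfl hxa
        · exact h'
      exact ih hmem' fun y hy => h y (List.mem_cons_of_mem _ hy)
    · rw [List.find?_cons_of_pos hx]
      exact congrArg some ((h x (by simp)).1 hx)

lemma enc_pos (M : TCM) (C : Config) : 0 < M.enc C := by
  unfold TCM.enc
  exact Nat.mul_pos (Nat.mul_pos (Nat.mul_pos (prm_pos _) (pow_pos (prm_pos _) _))
    (pow_pos (prm_pos _) _)) (pow_pos (prm_pos _) _)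

lemma stateOf_enc (M : TCM) (C : Config) (hC : C.1 < M.m) :
    M.stateOf (M.enc C % M.p) = some C.1 := by
  unfold TCM.stateOf
  apply find?_unique
  · exact List.mem_range.2 hC
  · intro s hs
    rw [List.mem_range] at hs
    rw [decide_eq_true_eq, prm_dvd_mod_p M s _ (by omega), prm_dvd_enc_iff]
    omega

lemma step_spec (M : TCM) {q : ℕ} {b1 b2 : Bool} {r : ℕ × Int × Int}
    (h : M.step q b1 b2 = some r) : ∃ e ∈ M.δ, e.1 = (q, b1, b2) ∧ e.2 = r := by
  unfold TCM.step at h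
  rcases hf : M.δ.find? (fun e => decide (e.1 = (q, b1, b2))) with _ | e
  · rw [hf] at h; simp at h
  · rw [hf] at h
    simp only [Option.map_some] at h
    refine ⟨e, List.mem_of_find?_eq_some hf, ?_, Option.some.inj h⟩
    have := List.find?_some hf
    simpa using this

lemma counter_eq (P v : ℕ) (d e : ℤ) (hd : d.natAbs ≤ 1)
    (he : e = if v ≠ 0 then d else max d 0) :
    (if e = 1 then P else 1) * P ^ v = (if e = -1 then P else 1) * P ^ ((v : ℤ) + d).toNat := by
  have hd3 : d = -1 ∨ d = 0 ∨ d = 1 := by omega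
  rcases Nat.eq_zero_or_pos v with hv | hv
  · subst hv
    rcases hd3 with rfl | rfl | rfl <;> simp_all
  · obtain ⟨w, rfl⟩ : ∃ w, v = w + 1 := ⟨v - 1, by omega⟩
    have hne : w + 1 ≠ 0 := by omega
    rw [he, if_pos hne]
    rcases hd3 with rfl | rfl | rfl
    · rw [show (((w + 1 : ℕ) : ℤ) + -1).toNat = w from by omega]
      norm_num [pow_succ]
      try ring
    · rw [show (((w + 1 : ℕ) : ℤ) + 0).toNat = w + 1 from by omega]
      norm_num
    · rw [show (((w + 1 : ℕ) : ℤ) + 1).toNat = w + 2 from by omega]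
      norm_num [pow_succ]
      try ring

lemma decide_b1 (M : TCM) (C : Config) (hC : C.1 < M.m) :
    decide (prm M.m ∣ M.enc C % M.p) = decide (C.2.1 ≠ 0) := by
  rw [decide_eq_decide, prm_dvd_mod_p M _ _ (by omega), prm_dvd_enc_iff]
  omega

lemma decide_b2 (M : TCM) (C : Config) (hC : C.1 < M.m) :
    decide (prm (M.m + 1) ∣ M.enc C % M.p) = decide (C.2.2.1 ≠ 0) := by
  rw [decide_eq_decide, prm_dvd_mod_p M _ _ (by omega), prm_dvd_enc_iff]
  omega

lemma qr_enc_none (M : TCM) (C : Config) (hC : C.1 < M.m)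
    (h : M.step C.1 (decide (C.2.1 ≠ 0)) (decide (C.2.2.1 ≠ 0)) = none) :
    M.qr (M.enc C % M.p) = (1, 1) := by
  unfold TCM.qr
  rw [stateOf_enc M C hC]
  simp only [decide_b1 M C hC, decide_b2 M C hC, h]

lemma qr_enc_some (M : TCM) (C : Config) (hC : C.1 < M.m) (s' : ℕ) (d1 d2 : ℤ)
    (h : M.step C.1 (decide (C.2.1 ≠ 0)) (decide (C.2.2.1 ≠ 0)) = some (s', d1, d2)) :
    M.qr (M.enc C % M.p) =
      (prm s' * prm (M.m + 2) *
          (if (if C.2.1 ≠ 0 then d1 else max d1 0) = 1 then prm M.m else 1) *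
          (if (if C.2.2.1 ≠ 0 then d2 else max d2 0) = 1 then prm (M.m + 1) else 1) /
        Nat.gcd
          (prm s' * prm (M.m + 2) *
            (if (if C.2.1 ≠ 0 then d1 else max d1 0) = 1 then prm M.m else 1) *
            (if (if C.2.2.1 ≠ 0 then d2 else max d2 0) = 1 then prm (M.m + 1) else 1))
          (prm C.1 *
            (if (if C.2.1 ≠ 0 then d1 else max d1 0) = -1 then prm M.m else 1) *
            (if (if C.2.2.1 ≠ 0 then d2 else max d2 0) = -1 then prm (M.m + 1) else 1)),
       prm C.1 *
          (if (if C.2.1 ≠ 0 then d1 else max d1 0) = -1 then prm M.m else 1) *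
          (if (if C.2.2.1 ≠ 0 then d2 else max d2 0) = -1 then prm (M.m + 1) else 1) /
        Nat.gcd
          (prm s' * prm (M.m + 2) *
            (if (if C.2.1 ≠ 0 then d1 else max d1 0) = 1 then prm M.m else 1) *
            (if (if C.2.2.1 ≠ 0 then d2 else max d2 0) = 1 then prm (M.m + 1) else 1))
          (prm C.1 *
            (if (if C.2.1 ≠ 0 then d1 else max d1 0) = -1 then prm M.m else 1) *
            (if (if C.2.2.1 ≠ 0 then d2 else max d2 0) = -1 then prm (M.m + 1) else 1))) := by
  unfold TCM.qr
  rw [stateOf_enc M C hC]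
  simp only [decide_b1 M C hC, decide_b2 M C hC, h, decide_eq_true_eq]

lemma g_enc_none (M : TCM) (C : Config) (hC : C.1 < M.m) (h : M.next C = none) :
    M.g (M.enc C) = M.enc C := by
  have hstep : M.step C.1 (decide (C.2.1 ≠ 0)) (decide (C.2.2.1 ≠ 0)) = none := by
    rcases hs : M.step C.1 (decide (C.2.1 ≠ 0)) (decide (C.2.2.1 ≠ 0)) with _ | r
    · rfl
    · obtain ⟨a, b, c⟩ := r
      unfold TCM.next at h
      rw [hs] at h
      simp at h
  unfold TCM.g TCM.qi TCM.ri
  rw [qr_enc_none M C hC hstep]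
  simp

lemma g_enc_some (M : TCM) (C C' : Config) (hC : C.1 < M.m) (h : M.next C = some C') :
    M.g (M.enc C) = M.enc C' ∧ C'.1 < M.m ∧ C'.2.2.2 = C.2.2.2 + 1 := by
  rcases hs : M.step C.1 (decide (C.2.1 ≠ 0)) (decide (C.2.2.1 ≠ 0)) with _ | r
  · unfold TCM.next at h
    rw [hs] at h
    simp at h
  obtain ⟨s', d1, d2⟩ := r
  have hC' : C' = (s', ((C.2.1 : ℤ) + d1).toNat, ((C.2.2.1 : ℤ) + d2).toNat, C.2.2.2 + 1) := by
    unfold TCM.next at h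
    rw [hs] at h
    exact (Option.some.inj h).symm
  obtain ⟨e, he, hekey, heval⟩ := step_spec M hs
  have hs'm : s' < M.m := by
    have := (M.wf e he).2.1
    rw [heval] at this
    exact this
  have hd1 : d1.natAbs ≤ 1 := by
    have := (M.wf e he).2.2.1
    rw [heval] at this
    exact this
  have hd2 : d2.natAbs ≤ 1 := by
    have := (M.wf e he).2.2.2
    rw [heval] at this
    exact this
  refine ⟨?_, by rw [hC']; exact hs'm, by rw [hC']⟩
  unfold TCM.g TCM.qi TCM.ri
  rw [qr_enc_some M C hC s' d1 d2 hs]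
  dsimp only
  set P1 := prm M.m with hP1
  set P2 := prm (M.m + 1) with hP2
  set e1 : ℤ := if C.2.1 ≠ 0 then d1 else max d1 0 with he1def
  set e2 : ℤ := if C.2.2.1 ≠ 0 then d2 else max d2 0 with he2def
  set num := prm s' * prm (M.m + 2) * (if e1 = 1 then P1 else 1) * (if e2 = 1 then P2 else 1)
    with hnum
  set den := prm C.1 * (if e1 = -1 then P1 else 1) * (if e2 = -1 then P2 else 1) with hden
  have h1 : (if e1 = 1 then P1 else 1) * P1 ^ C.2.1
      = (if e1 = -1 then P1 else 1) * P1 ^ ((C.2.1 : ℤ) + d1).toNat :=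
    counter_eq P1 C.2.1 d1 e1 hd1 he1def
  have h2 : (if e2 = 1 then P2 else 1) * P2 ^ C.2.2.1
      = (if e2 = -1 then P2 else 1) * P2 ^ ((C.2.2.1 : ℤ) + d2).toNat :=
    counter_eq P2 C.2.2.1 d2 e2 hd2 he2def
  have hnp : 0 < num := by
    rw [hnum]
    refine Nat.mul_pos (Nat.mul_pos (Nat.mul_pos (prm_pos _) (prm_pos _)) ?_) ?_ <;>
      · split
        · exact prm_pos _
        · exact one_pos
  have hdp : 0 < den := by
    rw [hden]
    refine Nat.mul_pos (Nat.mul_pos (prm_pos _) ?_) ?_ <;>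
      · split
        · exact prm_pos _
        · exact one_pos
  have key : num * M.enc C = den * M.enc C' := by
    rw [hC']
    calc num * M.enc C
        = (prm s' * prm C.1 * (prm (M.m + 2) ^ C.2.2.2 * prm (M.m + 2))) *
            (((if e1 = 1 then P1 else 1) * P1 ^ C.2.1) *
              ((if e2 = 1 then P2 else 1) * P2 ^ C.2.2.1)) := by
          rw [hnum]
          unfold TCM.enc
          ring
      _ = (prm s' * prm C.1 * (prm (M.m + 2) ^ C.2.2.2 * prm (M.m + 2))) *
            (((if e1 = -1 then P1 else 1) * P1 ^ ((C.2.1 : ℤ) + d1).toNat) *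
              ((if e2 = -1 then P2 else 1) * P2 ^ ((C.2.2.1 : ℤ) + d2).toNat)) := by
          rw [h1, h2]
      _ = den * M.enc (s', ((C.2.1 : ℤ) + d1).toNat, ((C.2.2.1 : ℤ) + d2).toNat, C.2.2.2 + 1) := by
          rw [hden]
          unfold TCM.enc
          dsimp only
          rw [pow_succ]
          ring
  obtain ⟨nu, hnu⟩ : Nat.gcd num den ∣ num := Nat.gcd_dvd_left num den
  obtain ⟨de, hde⟩ : Nat.gcd num den ∣ den := Nat.gcd_dvd_right num den
  have hkpos : 0 < Nat.gcd num den := Nat.gcd_pos_of_pos_left _ hnp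
  have hnu' : num / Nat.gcd num den = nu := Nat.div_eq_of_eq_mul_right hkpos hnu
  have hde' : den / Nat.gcd num den = de := Nat.div_eq_of_eq_mul_right hkpos hde
  have hdepos : 0 < de := by
    rcases Nat.eq_zero_or_pos de with h0 | h0
    · rw [h0, Nat.mul_zero] at hde
      omega
    · exact h0
  have key2 : nu * M.enc C = de * M.enc C' := by
    apply Nat.eq_of_mul_eq_mul_left hkpos
    rw [← mul_assoc, ← hnu, ← mul_assoc, ← hde]
    exact key
  rw [hnu', hde', key2, Nat.mul_div_cancel_left _ hdepos]

lemma run_inv (M : TCM) : ∀ k, ∀ C, M.run k = some C →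
    C.1 < M.m ∧ C.2.2.2 = k ∧ M.gIter k = M.enc C := by
  intro k
  induction k with
  | zero =>
    intro C hC
    have h0 : M.run 0 = some (0, 0, 0, 0) := rfl
    rw [h0] at hC
    obtain rfl := Option.some.inj hC
    refine ⟨M.hm, rfl, ?_⟩
    show (2 : ℕ) = M.enc (0, 0, 0, 0)
    unfold TCM.enc
    norm_num
    rfl
  | succ k ih =>
    intro C hC
    rcases hr : M.run k with _ | C0
    · rw [show M.run (k + 1) = (M.run k).bind M.next from rfl, hr] at hC
      simp at hC
    · rw [show M.run (k + 1) = (M.run k).bind M.next from rfl, hr, Option.bind_some] at hC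
      obtain ⟨h1, h2, h3⟩ := ih C0 hr
      obtain ⟨hg, hlt, ht⟩ := g_enc_some M C0 C h1 hC
      refine ⟨hlt, by omega, ?_⟩
      show M.g^[k + 1] 2 = M.enc C
      rw [Function.iterate_succ_apply']
      show M.g (M.gIter k) = M.enc C
      rw [h3, hg]

lemma halts_finite (M : TCM) (h : M.Halts) : M.Gset.Finite := by
  obtain ⟨n, C, hrun, hnone⟩ := h
  obtain ⟨h1, _, h3⟩ := run_inv M n C hrun
  have hfix : ∀ k, M.gIter (n + k) = M.enc C := by
    intro k
    induction k with
    | zero => simpa using h3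
    | succ k ih =>
      have : n + (k + 1) = (n + k) + 1 := by omega
      rw [this]
      show M.g^[(n + k) + 1] 2 = M.enc C
      rw [Function.iterate_succ_apply']
      show M.g (M.gIter (n + k)) = M.enc C
      rw [ih]
      exact g_enc_none M C h1 hnone
  apply Set.Finite.subset ((Finset.range (n + 1)).image M.gIter).finite_toSet
  rintro x ⟨k, rfl⟩
  simp only [Finset.coe_image, Set.mem_image, Finset.mem_coe, Finset.mem_range]
  by_cases hk : k ≤ n
  · exact ⟨k, by omega, rfl⟩
  · refine ⟨n, by omega, ?_⟩
    rw [h3]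
    have : k = n + (k - n) := by omega
    rw [this]
    exact (hfix (k - n)).symm

lemma nohalt_unbdd (M : TCM) (hnh : ¬ M.Halts) (B : ℕ) : ∃ x ∈ M.Gset, B < x := by
  have hrun : ∀ k, ∃ C, M.run k = some C := by
    intro k
    induction k with
    | zero => exact ⟨(0, 0, 0, 0), rfl⟩
    | succ k ih =>
      obtain ⟨C, hC⟩ := ih
      rcases hn : M.next C with _ | C'
      · exact absurd ⟨k, C, hC, hn⟩ hnh
      · refine ⟨C', ?_⟩
        show (M.run k).bind M.next = some C'
        rw [hC, Option.bind_some, hn]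
  obtain ⟨C, hC⟩ := hrun (B + 1)
  obtain ⟨hlt, htime, hg⟩ := run_inv M (B + 1) C hC
  refine ⟨M.gIter (B + 1), ⟨B + 1, rfl⟩, ?_⟩
  rw [hg]
  calc B < 2 ^ (B + 1) := by
        have := Nat.lt_two_pow_self (n := B + 1)
        omega
    _ ≤ prm (M.m + 2) ^ (B + 1) := Nat.pow_le_pow_left (prm_two_le _) _
    _ ≤ M.enc C := by
        rw [← htime]
        unfold TCM.enc
        exact Nat.le_mul_of_pos_left _
          (Nat.mul_pos (Nat.mul_pos (prm_pos _) (pow_pos (prm_pos _) _)) (pow_pos (prm_pos _) _))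

/-- a 3CM halts iff `G = {gᵏ(2) : k ∈ ℕ}` is bounded (equivalently, finite). -/
theorem stmt_1 (M : TCM) :
    (M.Halts ↔ ∃ B, ∀ x ∈ M.Gset, x ≤ B) ∧ (M.Halts ↔ M.Gset.Finite) := by
  have hbdd : (∃ B, ∀ x ∈ M.Gset, x ≤ B) → M.Halts := by
    rintro ⟨B, hB⟩
    by_contra hnh
    obtain ⟨x, hx, hBx⟩ := nohalt_unbdd M hnh B
    exact absurd (hB x hx) (by omega)
  refine ⟨⟨fun h => ?_, hbdd⟩, ⟨halts_finite M, fun h => ?_⟩⟩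
  · obtain ⟨B, hB⟩ := (halts_finite M h).bddAbove
    exact ⟨B, fun x hx => hB hx⟩
  · apply hbdd
    obtain ⟨B, hB⟩ := h.bddAbove
    exact ⟨B, fun x hx => hB hx⟩

end
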